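/- For every player i and every σ ∈ Σ_i: σ ∈ NSD^∞_i = ∩_{k≥0} NSD^k_i (i.e., σ survives iterated deletion of strongly dominated strategies) if and only if there exist a probability structure M appropriate for Γ and a state ω of M such that strat_i(ω) = σ and ω ∈ RAT^k_i(M) for every k ≥ 0. Moreover, when σ ∈ NSD^∞_i, the structure M can be taken to be finite with every subset of Ω measurable. -/

import Mathlib

open scoped BigOperators

noncomputable section

/-- A probability distribution on a finite type, represented as a weight function. -/
def IsDist {α : Type*} [Fintype α] (p : α → ℝ) : Prop :=
  (∀ a, 0 ≤ p a) ∧ ∑ a, p a = 1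

/-- The probability of a set under a weight function. -/
def probOf {α : Type*} [Fintype α] (p : α → ℝ) (E : Set α) : ℝ :=
  ∑ a, E.indicator p a

/-- A finite normal-form game with `n` players, all utilities in `[0,1]`. -/
structure Game (n : ℕ) where
  S : Fin n → Type
  fintypeS : ∀ i, Fintype (S i)
  decEqS : ∀ i, DecidableEq (S i)
  nonemptyS : ∀ i, Nonempty (S i)
  u : (i : Fin n) → ((j : Fin n) → S j) → ℝ
  u_mem : ∀ i σ, u i σ ∈ Set.Icc (0 : ℝ) 1

attribute [instance] Game.fintypeS Game.decEqS Game.nonemptyS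

namespace Game

variable {n : ℕ}

abbrev Prof (G : Game n) : Type := (j : Fin n) → G.S j

abbrev OppProf (G : Game n) (i : Fin n) : Type := (j : {j : Fin n // j ≠ i}) → G.S j.val

def stratOpp (G : Game n) (i : Fin n) (σ : G.Prof) : G.OppProf i := fun j => σ j.val

def combine (G : Game n) (i : Fin n) (s : G.S i) (τ : G.OppProf i) : G.Prof :=
  fun j => if h : j = i then cast (congrArg G.S h.symm) s else τ ⟨j, h⟩

/-- Expected utility of strategy `s` of player `i` under belief `b` on opponents' profiles. -/
def EU (G : Game n) (i : Fin n) (s : G.S i) (b : G.OppProf i → ℝ) : ℝ :=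
  ∑ τ : G.OppProf i, b τ * G.u i (G.combine i s τ)

/-- `s` is a best response to the belief `b`. -/
def BR (G : Game n) (i : Fin n) (s : G.S i) (b : G.OppProf i → ℝ) : Prop :=
  ∀ s' : G.S i, G.EU i s' b ≤ G.EU i s b

/-- Utility of mixed strategy `m` of player `i` against opponents' profile `τ`. -/
def EUmix (G : Game n) (i : Fin n) (m : G.S i → ℝ) (τ : G.OppProf i) : ℝ :=
  ∑ s : G.S i, m s * G.u i (G.combine i s τ)

/-- `s` is weakly dominated by the mixed strategy `m` with respect to `T`. -/
def WDom (G : Game n) (i : Fin n) (m : G.S i → ℝ) (s : G.S i)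
    (T : Set (G.OppProf i)) : Prop :=
  (∀ τ ∈ T, G.u i (G.combine i s τ) ≤ G.EUmix i m τ) ∧
    ∃ τ ∈ T, G.u i (G.combine i s τ) < G.EUmix i m τ

/-- `s` is strongly dominated by the mixed strategy `m` with respect to `T`. -/
def SDom (G : Game n) (i : Fin n) (m : G.S i → ℝ) (s : G.S i)
    (T : Set (G.OppProf i)) : Prop :=
  ∀ τ ∈ T, G.u i (G.combine i s τ) < G.EUmix i m τ

/-- Strategies of player `i` surviving `k` rounds of iterated deletion of weakly
dominated strategies. -/
def NWD (G : Game n) : ℕ → (i : Fin n) → Set (G.S i)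
  | 0 => fun _ => Set.univ
  | k + 1 => fun i =>
      {s | s ∈ NWD G k i ∧
        ¬∃ m : G.S i → ℝ, IsDist m ∧
          G.WDom i m s {τ : G.OppProf i | ∀ j, τ j ∈ NWD G k j.val}}

/-- Strategies of player `i` surviving `k` rounds of iterated deletion of strongly
dominated strategies. -/
def NSD (G : Game n) : ℕ → (i : Fin n) → Set (G.S i)
  | 0 => fun _ => Set.univ
  | k + 1 => fun i =>
      {s | s ∈ NSD G k i ∧
        ¬∃ m : G.S i → ℝ, IsDist m ∧
          G.SDom i m s {τ : G.OppProf i | ∀ j, τ j ∈ NSD G k j.val}}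

end Game

open MeasureTheory in
/-- A probability structure appropriate for the game `G`. -/
structure PStruct {n : ℕ} (G : Game n) where
  Ω : Type
  meas : MeasurableSpace Ω
  strat : Ω → G.Prof
  PR : Fin n → Ω → @Measure Ω meas
  PR_prob : ∀ i ω, @IsProbabilityMeasure Ω meas (PR i ω)
  strat_meas : ∀ (j : Fin n) (s : G.S j), MeasurableSet[meas] {ω | strat ω j = s}
  PR_own_strat : ∀ i ω, PR i ω {ω' | strat ω' i = strat ω i} = 1
  PR_meas : ∀ (i : Fin n) (π : @Measure Ω meas), MeasurableSet[meas] {ω | PR i ω = π}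
  PR_own_PR : ∀ i ω, PR i ω {ω' | PR i ω' = PR i ω} = 1

namespace PStruct

variable {n : ℕ} {G : Game n}

/-- The belief on opponents' strategy profiles induced by `PR i ω`. -/
def belief (M : PStruct G) (i : Fin n) (ω : M.Ω) : G.OppProf i → ℝ :=
  fun τ => (M.PR i ω {ω' | G.stratOpp i (M.strat ω') = τ}).toReal

/-- `(M,ω) ⊨ RAT_i`. -/
def RATi (M : PStruct G) (i : Fin n) (ω : M.Ω) : Prop :=
  G.BR i (M.strat ω i) (M.belief i ω)

/-- `(M,ω) ⊨ B_i E`. -/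
def Bel (M : PStruct G) (i : Fin n) (ω : M.Ω) (E : Set M.Ω) : Prop :=
  ∃ F, @MeasurableSet M.Ω M.meas F ∧ F ⊆ E ∧ M.PR i ω F = 1

/-- `(M,ω) ⊨ ⟨B_i⟩ E`. -/
def BelPos (M : PStruct G) (i : Fin n) (ω : M.Ω) (E : Set M.Ω) : Prop :=
  ∃ F, @MeasurableSet M.Ω M.meas F ∧ F ⊆ E ∧ 0 < M.PR i ω F

end PStruct

/-- The events `RATzero^k_i(M)`, defined simultaneously for all appropriate structures. -/
def RATzero {n : ℕ} (G : Game n) : (k : ℕ) → (M : PStruct G) → Fin n → Set M.Ω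
  | 0, _, _ => Set.univ
  | k + 1, M, i =>
      {ω | M.RATi i ω ∧
        M.Bel i ω {ω' | ∃ M' : PStruct G, ∃ ω'' : M'.Ω,
          M'.strat ω'' i = M.strat ω' i ∧ ω'' ∈ RATzero G k M' i} ∧
        M.Bel i ω {ω' | ∀ j, j ≠ i → ω' ∈ RATzero G k M j} ∧
        ∀ j, j ≠ i → ∀ s : G.S j,
          (∃ M' : PStruct G, ∃ ω' : M'.Ω, M'.strat ω' j = s ∧
              ∀ j', j' ≠ i → ω' ∈ RATzero G k M' j') →
            M.BelPos i ω {ω'' | M.strat ω'' j = s}}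

/-- The events `RAT^k_i(M)`. -/
def RATk {n : ℕ} (G : Game n) (M : PStruct G) : (k : ℕ) → Fin n → Set M.Ω
  | 0, _ => Set.univ
  | k + 1, i => {ω | M.RATi i ω ∧ M.Bel i ω {ω' | ∀ j, j ≠ i → ω' ∈ RATk G M k j}}

/-- The event that every player is rational. -/
def RATall {n : ℕ} {G : Game n} (M : PStruct G) : Set M.Ω := {ω | ∀ j, M.RATi j ω}

/-- The "everyone believes" operator iterated `k` times. -/
def Ek {n : ℕ} {G : Game n} (M : PStruct G) : ℕ → Set M.Ω → Set M.Ω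
  | 0, X => X
  | k + 1, X => {ω | ∀ j, M.Bel j ω (Ek M k X)}

/-- `σ` is a rationalizable strategy for player `i`. -/
def Rationalizable {n : ℕ} (G : Game n) (i : Fin n) (σ : G.S i) : Prop :=
  ∃ Z : (j : Fin n) → Set (G.S j),
    σ ∈ Z i ∧
    ∀ j, ∀ σ' ∈ Z j, ∃ μ : G.OppProf j → ℝ, IsDist μ ∧
      (∀ τ, 0 < μ τ → ∀ j', τ j' ∈ Z j'.val) ∧ G.BR j σ' μ

/-- `σ` is rationalizable′ for player `i`. -/
def Rationalizable' {n : ℕ} (G : Game n) (i : Fin n) (σ : G.S i) : Prop :=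
  ∃ X : ℕ → (j : Fin n) → Set (G.S j),
    (∀ j, X 0 j = Set.univ) ∧
    (∀ (k : ℕ) (j : Fin n), ∀ σ' ∈ X (k + 1) j, ∃ μ : G.OppProf j → ℝ, IsDist μ ∧
      (∀ τ, 0 < μ τ → ∀ j', τ j' ∈ X k j'.val) ∧ G.BR j σ' μ) ∧
    ∀ k, σ ∈ X k i

end
section Dual
open Finset in
lemma dual_exists {ι κ : Type} [Fintype ι] [Fintype κ] [Nonempty ι]
    (A : ι → κ → ℝ) (T : Set κ)
    (h : ¬ ∃ m : ι → ℝ, IsDist m ∧ ∀ τ ∈ T, 0 < ∑ s, m s * A s τ) :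
    ∃ μ : κ → ℝ, IsDist μ ∧ (∀ τ, 0 < μ τ → τ ∈ T) ∧ ∀ s, ∑ τ, μ τ * A s τ ≤ 0 := by
  classical
  set O : Set (κ → ℝ) := {x | ∀ τ ∈ T, 0 < x τ} with hO
  set D : Set (κ → ℝ) := {x | ∃ m : ι → ℝ, IsDist m ∧ ∀ τ ∈ T, x τ ≤ ∑ s, m s * A s τ} with hD
  have hOopen : IsOpen O := by
    have : O = ⋂ τ ∈ T, {x : κ → ℝ | 0 < x τ} := by ext x; simp [hO]
    rw [this]
    exact (Set.toFinite T).isOpen_biInter fun τ _ =>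
      isOpen_lt continuous_const (continuous_apply τ)
  have hOconv : Convex ℝ O := by
    have : O = ⋂ τ ∈ T, {x : κ → ℝ | 0 < x τ} := by ext x; simp [hO]
    rw [this]
    exact convex_iInter fun τ => convex_iInter fun _ =>
      convex_halfSpace_gt ⟨fun a b => rfl, fun a b => rfl⟩ 0
  have hDconv : Convex ℝ D := by
    rintro x ⟨m, hm, hx⟩ y ⟨m', hm', hy⟩ a b ha hb hab
    refine ⟨fun s => a * m s + b * m' s, ⟨fun s => add_nonneg (mul_nonneg ha (hm.1 s)) (mul_nonneg hb (hm'.1 s)), ?_⟩, fun τ hτ => ?_⟩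
    · rw [Finset.sum_add_distrib, ← Finset.mul_sum, ← Finset.mul_sum, hm.2, hm'.2]
      linarith
    · have h1 := hx τ hτ
      have h2 := hy τ hτ
      have : ∑ s, (a * m s + b * m' s) * A s τ
          = a * ∑ s, m s * A s τ + b * ∑ s, m' s * A s τ := by
        rw [Finset.mul_sum, Finset.mul_sum, ← Finset.sum_add_distrib]
        congr 1; ext s; ring
      simp only [Pi.add_apply, Pi.smul_apply, smul_eq_mul]
      rw [this]
      nlinarith
  have hdisj : Disjoint O D := by
    rw [Set.disjoint_left]
    rintro x hxO ⟨m, hm, hx⟩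
    exact h ⟨m, hm, fun τ hτ => lt_of_lt_of_le (hxO τ hτ) (hx τ hτ)⟩
  obtain ⟨f, u, hfu, huf⟩ := geometric_hahn_banach_open hOconv hOopen hDconv hdisj
  have hone : (fun _ => (1:ℝ)) ∈ O := fun τ _ => one_pos
  have hOd : ∀ c : ℝ, 0 < c → (fun _ => c) ∈ O := fun c hc τ _ => hc
  have hf1 : ∀ c : ℝ, 0 < c → c * f (fun _ => (1:ℝ)) < u := by
    intro c hc
    have := hfu (fun _ => c) (hOd c hc)
    have hcs : (fun _ => c : κ → ℝ) = c • (fun _ => (1:ℝ) : κ → ℝ) := by funext τ; simp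
    rwa [hcs, map_smul, smul_eq_mul] at this
  have hu0 : 0 ≤ u := by
    by_contra hu
    push_neg at hu
    rcases le_or_gt (f fun _ => (1:ℝ)) 0 with h1 | h1
    · rcases eq_or_lt_of_le h1 with h1 | h1
      · have := hf1 1 one_pos; rw [h1] at this; linarith
      · have hc : 0 < u / f (fun _ => (1:ℝ)) := div_pos_of_neg_of_neg hu h1
        have := hf1 _ hc
        rw [div_mul_cancel₀ _ (ne_of_lt h1)] at this
        exact lt_irrefl u this
    · have := hf1 1 one_pos; linarith
  set lam : κ → ℝ := fun τ => f ((Pi.single τ 1 : κ → ℝ)) with hlam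
  have hsingle : ∀ (x : κ → ℝ) (τ : κ), Pi.single τ (x τ) = (x τ) • (Pi.single τ 1 : κ → ℝ) := by
    intro x τ; funext j
    by_cases hj : j = τ <;> simp [Pi.single_apply, hj]
  have hrep : ∀ x : κ → ℝ, f x = ∑ τ, x τ * lam τ := by
    intro x
    have hx : x = ∑ τ, (x τ) • (Pi.single τ 1 : κ → ℝ) := by
      conv_lhs => rw [← Finset.univ_sum_single x]
      congr 1; funext τ; exact hsingle x τ
    conv_lhs => rw [hx, map_sum]
    exact Finset.sum_congr rfl fun τ _ => by rw [map_smul, smul_eq_mul]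
  have hOpert : ∀ (c : ℝ) (τ : κ), (τ ∈ T → 0 < c) → ((fun _ => (1:ℝ)) + c • (Pi.single τ 1 : κ → ℝ)) ∈ O := by
    intro c τ hc τ' hτ'
    by_cases hj : τ' = τ
    · subst hj
      simp only [Pi.add_apply, Pi.smul_apply, smul_eq_mul]
      have := hc hτ'
      simp [Pi.single_apply]
      linarith
    · simp [Pi.single_apply, hj]
  have hfpert : ∀ (c : ℝ) (τ : κ), ((fun _ => (1:ℝ)) + c • (Pi.single τ 1 : κ → ℝ)) ∈ O →
      f (fun _ => (1:ℝ)) + c * lam τ < u := by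
    intro c τ hc
    have := hfu _ hc
    rwa [map_add, map_smul, smul_eq_mul] at this
  have hlam_zero : ∀ τ, τ ∉ T → lam τ = 0 := by
    intro τ hτ
    by_contra hne
    have := hfpert ((u - f (fun _ => (1:ℝ))) / lam τ) τ (hOpert _ τ (fun h => absurd h hτ))
    rw [div_mul_cancel₀ _ hne] at this
    linarith
  have hlam_nonpos : ∀ τ, lam τ ≤ 0 := by
    intro τ
    by_cases hτ : τ ∈ T
    · by_contra hpos
      push_neg at hpos
      set c := max 1 ((u - f (fun _ => (1:ℝ))) / lam τ + 1) with hc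
      have hc1 : (0:ℝ) < c := lt_of_lt_of_le one_pos (le_max_left _ _)
      have := hfpert c τ (hOpert c τ (fun _ => hc1))
      have hcl : ((u - f (fun _ => (1:ℝ))) / lam τ + 1) * lam τ ≤ c * lam τ :=
        mul_le_mul_of_nonneg_right (le_max_right _ _) hpos.le
      rw [add_mul, div_mul_cancel₀ _ (ne_of_gt hpos), one_mul] at hcl
      linarith
    · exact le_of_eq (hlam_zero τ hτ)
  have hDA : ∀ s : ι, (fun τ => A s τ) ∈ D := by
    intro s
    refine ⟨fun s' => if s' = s then 1 else 0, ⟨fun s' => by positivity, by simp⟩, fun τ _ => ?_⟩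
    simp [ite_mul]
  have hAu : ∀ s : ι, u ≤ ∑ τ, A s τ * lam τ := by
    intro s
    have := huf _ (hDA s)
    rwa [hrep] at this
  have hne : ∃ τ, lam τ < 0 := by
    by_contra hall
    push_neg at hall
    have hz : ∀ τ, lam τ = 0 := fun τ => le_antisymm (hlam_nonpos τ) (hall τ)
    have h1 : f (fun _ => (1:ℝ)) = 0 := by rw [hrep]; simp [hz]
    have h2 := hf1 1 one_pos
    rw [h1] at h2
    have h3 := hAu (Classical.arbitrary ι)
    simp [hz] at h3
    linarith
  set c := ∑ τ, -lam τ with hcdef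
  have hcpos : 0 < c := by
    obtain ⟨τ0, hτ0⟩ := hne
    exact Finset.sum_pos' (fun τ _ => by linarith [hlam_nonpos τ]) ⟨τ0, Finset.mem_univ τ0, by linarith⟩
  refine ⟨fun τ => -lam τ / c, ⟨fun τ => div_nonneg (by linarith [hlam_nonpos τ]) hcpos.le, ?_⟩,
    fun τ hτ => ?_, fun s => ?_⟩
  · rw [← Finset.sum_div, div_self (ne_of_gt hcpos)]
  · by_contra hT
    simp [hlam_zero τ hT] at hτ
  · have h1 : 0 ≤ ∑ τ, A s τ * lam τ := le_trans hu0 (hAu s)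
    have heq : ∑ τ, -lam τ / c * A s τ = -(∑ τ, A s τ * lam τ) / c := by
      rw [neg_div, Finset.sum_div, ← Finset.sum_neg_distrib]
      exact Finset.sum_congr rfl fun τ _ => by ring
    rw [heq]
    exact div_nonpos_of_nonpos_of_nonneg (neg_nonpos.mpr h1) hcpos.le
end Dual
section Helpers
namespace Game
variable {n : ℕ} (G : Game n)

lemma combine_self (i : Fin n) (s : G.S i) (τ : G.OppProf i) : G.combine i s τ i = s := by
  simp [Game.combine]

lemma combine_ne (i : Fin n) (s : G.S i) (τ : G.OppProf i) (j : Fin n) (h : j ≠ i) :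
    G.combine i s τ j = τ ⟨j, h⟩ := by
  simp [Game.combine, h]

lemma stratOpp_combine (i : Fin n) (s : G.S i) (τ : G.OppProf i) :
    G.stratOpp i (G.combine i s τ) = τ := by
  funext j
  exact G.combine_ne i s τ j.val j.prop

lemma combine_stratOpp (i : Fin n) (σ : G.Prof) :
    G.combine i (σ i) (G.stratOpp i σ) = σ := by
  funext j
  by_cases h : j = i
  · subst h; exact G.combine_self _ _ _
  · rw [G.combine_ne _ _ _ j h]; rfl

/-- `Prof` is equivalent to own strategy × opponents' profile. -/
def profEquiv (i : Fin n) : G.Prof ≃ G.S i × G.OppProf i where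
  toFun σ := (σ i, G.stratOpp i σ)
  invFun p := G.combine i p.1 p.2
  left_inv σ := G.combine_stratOpp i σ
  right_inv p := by
    cases p with
    | mk s τ => simp [G.combine_self, G.stratOpp_combine]

lemma sum_prof (i : Fin n) (f : G.Prof → ℝ) :
    ∑ σ' : G.Prof, f σ' = ∑ s : G.S i, ∑ τ : G.OppProf i, f (G.combine i s τ) := by
  rw [Fintype.sum_equiv (G.profEquiv i) f (fun p => f (G.combine i p.1 p.2))
    (fun σ' => (congrArg f (G.combine_stratOpp i σ')).symm)]
  exact Fintype.sum_prod_type _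

lemma NSD_succ_subset (k : ℕ) (j : Fin n) : G.NSD (k+1) j ⊆ G.NSD k j := fun s hs => hs.1

lemma NSD_le_subset {k m : ℕ} (h : k ≤ m) (j : Fin n) : G.NSD m j ⊆ G.NSD k j := by
  induction m with
  | zero => rw [Nat.le_zero.mp h]
  | succ m ih =>
    rcases Nat.lt_or_ge k (m+1) with h' | h'
    · exact fun s hs => ih (Nat.lt_succ_iff.mp h') (G.NSD_succ_subset m j hs)
    · have : k = m + 1 := le_antisymm h h'
      rw [this]

/-- A pure best reply against a fixed profile in `NSD^k` survives to round `k+1`. -/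
lemma argmax_mem_NSD : ∀ (k : ℕ) (j : Fin n) (τ : G.OppProf j),
    (∀ j', τ j' ∈ G.NSD k j'.val) → ∀ s : G.S j,
    (∀ s' : G.S j, G.u j (G.combine j s' τ) ≤ G.u j (G.combine j s τ)) →
    s ∈ G.NSD (k+1) j := by
  intro k
  induction k with
  | zero =>
    intro j τ _ s hs
    refine ⟨trivial, ?_⟩
    rintro ⟨m, hm, hdom⟩
    have hτT : τ ∈ {τ' : G.OppProf j | ∀ j', τ' j' ∈ G.NSD 0 j'.val} := fun j' => trivial
    have h1 := hdom τ hτT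
    have h2 : G.EUmix j m τ ≤ G.u j (G.combine j s τ) := by
      calc G.EUmix j m τ = ∑ s', m s' * G.u j (G.combine j s' τ) := rfl
        _ ≤ ∑ s', m s' * G.u j (G.combine j s τ) :=
          Finset.sum_le_sum fun s' _ => mul_le_mul_of_nonneg_left (hs s') (hm.1 s')
        _ = G.u j (G.combine j s τ) := by rw [← Finset.sum_mul, hm.2, one_mul]
    linarith
  | succ k ih =>
    intro j τ hτ s hs
    have hmem : s ∈ G.NSD (k+1) j :=
      ih j τ (fun j' => G.NSD_succ_subset k j'.val (hτ j')) s hs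
    refine ⟨hmem, ?_⟩
    rintro ⟨m, hm, hdom⟩
    have h1 := hdom τ hτ
    have h2 : G.EUmix j m τ ≤ G.u j (G.combine j s τ) := by
      calc G.EUmix j m τ = ∑ s', m s' * G.u j (G.combine j s' τ) := rfl
        _ ≤ ∑ s', m s' * G.u j (G.combine j s τ) :=
          Finset.sum_le_sum fun s' _ => mul_le_mul_of_nonneg_left (hs s') (hm.1 s')
        _ = G.u j (G.combine j s τ) := by rw [← Finset.sum_mul, hm.2, one_mul]
    linarith

lemma NSD_nonempty : ∀ (k : ℕ) (j : Fin n), (G.NSD k j).Nonempty := by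
  intro k
  induction k with
  | zero => exact fun j => ⟨Classical.arbitrary _, trivial⟩
  | succ k ih =>
    intro j
    obtain ⟨s, _, hs⟩ := Finset.exists_max_image Finset.univ
      (fun s' => G.u j (G.combine j s' (fun j' => (ih j'.val).some)))
      ⟨Classical.arbitrary _, Finset.mem_univ _⟩
    exact ⟨s, G.argmax_mem_NSD k j _ (fun j' => (ih j'.val).some_mem) s
      fun s' => hs s' (Finset.mem_univ s')⟩

end Game
end Helpers
section Reverse
open MeasureTheory

variable {n : ℕ} {G : Game n}

lemma RATk_succ_subset (M : PStruct G) :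
    ∀ (k : ℕ) (j : Fin n), RATk G M (k+1) j ⊆ RATk G M k j := by
  intro k
  induction k with
  | zero => intro j ω _; exact Set.mem_univ ω
  | succ k ih =>
    rintro j ω ⟨hr, hb⟩
    obtain ⟨F, h1, h2, h3⟩ := hb
    exact ⟨hr, F, h1, fun ω' hω' j' hj' => ih j' (h2 hω' j' hj'), h3⟩

lemma oppSet_measurable (M : PStruct G) (j : Fin n) (τ : G.OppProf j) :
    MeasurableSet[M.meas] {ω' | G.stratOpp j (M.strat ω') = τ} := by
  letI := M.meas
  have : {ω' | G.stratOpp j (M.strat ω') = τ}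
      = ⋂ j' : {j' : Fin n // j' ≠ j}, {ω' | M.strat ω' j'.val = τ j'} := by
    ext ω'
    simp only [Set.mem_setOf_eq, Set.mem_iInter, funext_iff]
    exact ⟨fun h j' => h j', fun h j' => h j'⟩
  rw [this]
  exact MeasurableSet.iInter fun j' => M.strat_meas j'.val (τ j')

lemma belief_sum_one (M : PStruct G) (j : Fin n) (ω : M.Ω) :
    ∑ τ : G.OppProf j, M.belief j ω τ = 1 := by
  letI := M.meas
  haveI := M.PR_prob j ω
  have hdisj : Pairwise (Function.onFun Disjoint
      fun τ : G.OppProf j => {ω' | G.stratOpp j (M.strat ω') = τ}) := by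
    intro τ1 τ2 hne
    simp only [Function.onFun, Set.disjoint_left]
    intro ω' h1 h2
    exact hne (h1 ▸ h2 ▸ rfl)
  have huniv : (⋃ τ : G.OppProf j, {ω' | G.stratOpp j (M.strat ω') = τ}) = Set.univ := by
    ext ω'; simp only [Set.mem_iUnion, Set.mem_univ, iff_true]
    exact ⟨G.stratOpp j (M.strat ω'), rfl⟩
  have h1 : ∑' τ : G.OppProf j, M.PR j ω {ω' | G.stratOpp j (M.strat ω') = τ} = 1 := by
    rw [← measure_iUnion hdisj (fun τ => oppSet_measurable M j τ), huniv, measure_univ]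
  rw [tsum_fintype] at h1
  have h2 : ∑ τ : G.OppProf j, M.belief j ω τ
      = (∑ τ : G.OppProf j, M.PR j ω {ω' | G.stratOpp j (M.strat ω') = τ}).toReal := by
    rw [ENNReal.toReal_sum (fun τ _ => measure_ne_top _ _)]
    rfl
  rw [h2, h1, ENNReal.toReal_one]

lemma belief_nonneg (M : PStruct G) (j : Fin n) (ω : M.Ω) (τ : G.OppProf j) :
    0 ≤ M.belief j ω τ := ENNReal.toReal_nonneg

lemma strat_mem_NSD_of_RATk (M : PStruct G) :
    ∀ (k : ℕ) (j : Fin n) (ω : M.Ω), ω ∈ RATk G M k j → M.strat ω j ∈ G.NSD k j := by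
  intro k
  induction k with
  | zero => intro j ω _; trivial
  | succ k ih =>
    rintro j ω ⟨hrat, F, hFmeas, hFsub, hF1⟩
    letI := M.meas
    haveI := M.PR_prob j ω
    set s := M.strat ω j with hs
    set μ := M.belief j ω with hμ
    have hmemk : M.strat ω j ∈ G.NSD k j :=
      ih j ω (RATk_succ_subset M k j ⟨hrat, F, hFmeas, hFsub, hF1⟩)
    refine ⟨hmemk, ?_⟩
    rintro ⟨m, hm, hdom⟩
    -- support of belief is contained in NSD_k profiles
    have hsupp : ∀ τ : G.OppProf j, 0 < μ τ → ∀ j', τ j' ∈ G.NSD k j'.val := by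
      intro τ hτ j0
      by_contra hj0
      have hsub : {ω' | G.stratOpp j (M.strat ω') = τ} ⊆ Fᶜ := by
        intro ω' hω' hωF
        apply hj0
        have h1 : M.strat ω' j0.val ∈ G.NSD k j0.val :=
          ih j0.val ω' (hFsub hωF j0.val j0.prop)
        have h2 : τ j0 = M.strat ω' j0.val := by
          rw [← hω']; rfl
        rw [h2]; exact h1
      have hc : M.PR j ω Fᶜ = 0 := by
        rw [measure_compl hFmeas (measure_ne_top _ _), hF1, measure_univ, tsub_self]
      have : M.PR j ω {ω' | G.stratOpp j (M.strat ω') = τ} = 0 :=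
        le_antisymm (le_trans (measure_mono hsub) hc.le) zero_le
      rw [hμ] at hτ
      unfold PStruct.belief at hτ
      rw [this] at hτ
      simp at hτ
    -- there is a belief-positive profile
    have hex : ∃ τ : G.OppProf j, 0 < μ τ := by
      by_contra hall
      push_neg at hall
      have : ∑ τ : G.OppProf j, μ τ = 0 :=
        Finset.sum_eq_zero fun τ _ => le_antisymm (hall τ) (belief_nonneg M j ω τ)
      rw [belief_sum_one M j ω] at this
      norm_num at this
    -- the expected-utility contradiction
    have hkey : ∑ s' : G.S j, m s' * G.EU j s' μ ≤ G.EU j s μ := by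
      calc ∑ s' : G.S j, m s' * G.EU j s' μ
          ≤ ∑ s' : G.S j, m s' * G.EU j s μ :=
            Finset.sum_le_sum fun s' _ => mul_le_mul_of_nonneg_left (hrat s') (hm.1 s')
        _ = G.EU j s μ := by rw [← Finset.sum_mul, hm.2, one_mul]
    have hswap : ∑ s' : G.S j, m s' * G.EU j s' μ = ∑ τ, μ τ * G.EUmix j m τ := by
      unfold Game.EU Game.EUmix
      calc ∑ s' : G.S j, m s' * ∑ τ, μ τ * G.u j (G.combine j s' τ)
          = ∑ s' : G.S j, ∑ τ, m s' * (μ τ * G.u j (G.combine j s' τ)) :=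
            Finset.sum_congr rfl fun s' _ => Finset.mul_sum _ _ _
        _ = ∑ τ, ∑ s' : G.S j, m s' * (μ τ * G.u j (G.combine j s' τ)) := Finset.sum_comm
        _ = ∑ τ, μ τ * ∑ s' : G.S j, m s' * G.u j (G.combine j s' τ) := by
            refine Finset.sum_congr rfl fun τ _ => ?_
            rw [Finset.mul_sum]
            exact Finset.sum_congr rfl fun s' _ => by ring
    have hstrict : G.EU j s μ < ∑ τ, μ τ * G.EUmix j m τ := by
      unfold Game.EU
      refine Finset.sum_lt_sum (fun τ _ => ?_) ?_
      · rcases lt_or_eq_of_le (belief_nonneg M j ω τ) with hpos | hzero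
        · exact mul_le_mul_of_nonneg_left (hdom τ (hsupp τ hpos)).le (le_of_lt hpos)
        · have hz : μ τ = 0 := hzero.symm
          rw [hz]; simp
      · obtain ⟨τ, hτ⟩ := hex
        exact ⟨τ, Finset.mem_univ τ, mul_lt_mul_of_pos_left (hdom τ (hsupp τ hτ)) hτ⟩
    linarith

end Reverse
section Construct
open MeasureTheory
attribute [local instance] Classical.propDecidable

/-- A measure on a finite type (with `⊤` σ-algebra) given by a weight function. -/
noncomputable def finMeasure {Ω : Type} [Fintype Ω] (w : Ω → ℝ) : @Measure Ω ⊤ :=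
  ∑ ω : Ω, ENNReal.ofReal (w ω) • @Measure.dirac Ω ⊤ ω

lemma finMeasure_apply {Ω : Type} [Fintype Ω] (w : Ω → ℝ) (E : Set Ω) :
    finMeasure w E = ∑ ω : Ω, E.indicator (fun ω' => ENNReal.ofReal (w ω')) ω := by
  letI : MeasurableSpace Ω := ⊤
  rw [finMeasure, Measure.finset_sum_apply]
  refine Finset.sum_congr rfl fun ω _ => ?_
  rw [Measure.smul_apply, Measure.dirac_apply' ω (MeasurableSpace.measurableSet_top),
    smul_eq_mul]
  by_cases h : ω ∈ E
  · rw [Set.indicator_of_mem h, Set.indicator_of_mem h]; simp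
  · rw [Set.indicator_of_notMem h, Set.indicator_of_notMem h]; simp

lemma finMeasure_apply_toReal {Ω : Type} [Fintype Ω] (w : Ω → ℝ) (hw : ∀ ω, 0 ≤ w ω)
    (E : Set Ω) :
    (finMeasure w E).toReal = ∑ ω : Ω, E.indicator w ω := by
  rw [finMeasure_apply, ENNReal.toReal_sum]
  · refine Finset.sum_congr rfl fun ω _ => ?_
    by_cases h : ω ∈ E
    · rw [Set.indicator_of_mem h, Set.indicator_of_mem h, ENNReal.toReal_ofReal (hw ω)]
    · rw [Set.indicator_of_notMem h, Set.indicator_of_notMem h]; simp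
  · intro ω _
    by_cases h : ω ∈ E
    · rw [Set.indicator_of_mem h]; exact ENNReal.ofReal_ne_top
    · rw [Set.indicator_of_notMem h]; exact ENNReal.zero_ne_top

lemma sum_subtype_univ {α : Type} [Fintype α] (p : α → Prop) [DecidablePred p]
    [Fintype {a : α // p a}] (f : α → ℝ) :
    ∑ x : {a : α // p a}, f x.val = ∑ a : α, if p a then f a else 0 := by
  rw [← Finset.sum_filter]
  exact (Finset.sum_subtype _ (by simp) f).symm

namespace GameConstruct

variable {n : ℕ} (G : Game n) (K : ℕ) (bel : ∀ j : Fin n, G.S j → (G.OppProf j → ℝ))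

/-- The state space: profiles surviving `K` rounds of deletion. -/
abbrev ZOmega : Type := {σ' : G.Prof // ∀ j, σ' j ∈ G.NSD K j}

instance : Finite (ZOmega G K) := Subtype.finite

/-- Weights of player `j`'s subjective distribution at state `ω`. -/
noncomputable def wgt (j : Fin n) (ω ω' : ZOmega G K) : ℝ :=
  if ω'.val j = ω.val j then bel j (ω.val j) (G.stratOpp j ω'.val) else 0

/-- Core summation identity over the restricted state space. -/
lemma sum_core (j : Fin n) (s : G.S j) (hs : s ∈ G.NSD K j) (f : G.OppProf j → ℝ)
    (hf : ∀ τ, ¬(∀ j', τ j' ∈ G.NSD K j'.val) → f τ = 0) :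
    ∑ ω' : ZOmega G K, (if ω'.val j = s then f (G.stratOpp j ω'.val) else 0)
      = ∑ τ : G.OppProf j, f τ := by
  rw [sum_subtype_univ (fun σ' : G.Prof => ∀ j', σ' j' ∈ G.NSD K j')
    (fun σ' => if σ' j = s then f (G.stratOpp j σ') else 0)]
  rw [G.sum_prof j]
  have hterm : ∀ (a : G.S j) (τ : G.OppProf j),
      (if (∀ j', G.combine j a τ j' ∈ G.NSD K j')
        then (if G.combine j a τ j = s then f (G.stratOpp j (G.combine j a τ)) else 0) else 0)
      = if a = s then f τ else 0 := by
    intro a τ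
    rw [G.combine_self j a τ, G.stratOpp_combine j a τ]
    by_cases has : a = s
    · subst has
      simp only [if_pos rfl]
      by_cases hQ : ∀ j', G.combine j a τ j' ∈ G.NSD K j'
      · rw [if_pos hQ]
      · rw [if_neg hQ]
        by_cases hP : ∀ j', τ j' ∈ G.NSD K j'.val
        · exfalso
          apply hQ
          intro j'
          by_cases hj' : j' = j
          · rw [hj', G.combine_self j a τ]; exact hs
          · rw [G.combine_ne j a τ j' hj']; exact hP ⟨j', hj'⟩
        · exact (hf τ hP).symm
    · simp [has]
  calc ∑ a : G.S j, ∑ τ : G.OppProf j,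
        (if (∀ j', G.combine j a τ j' ∈ G.NSD K j')
          then (if G.combine j a τ j = s then f (G.stratOpp j (G.combine j a τ)) else 0) else 0)
      = ∑ a : G.S j, ∑ τ : G.OppProf j, (if a = s then f τ else 0) := by
        exact Finset.sum_congr rfl fun a _ => Finset.sum_congr rfl fun τ _ => hterm a τ
    _ = ∑ a : G.S j, (if a = s then ∑ τ : G.OppProf j, f τ else 0) := by
        refine Finset.sum_congr rfl fun a _ => ?_
        by_cases has : a = s <;> simp [has]
    _ = ∑ τ : G.OppProf j, f τ := by rw [Finset.sum_ite_eq' Finset.univ s]; simp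

lemma wgt_nonneg (hdist : ∀ (j : Fin n) (s : G.S j), s ∈ G.NSD K j → IsDist (bel j s))
    (j : Fin n) (ω ω' : ZOmega G K) : 0 ≤ wgt G K bel j ω ω' := by
  unfold wgt
  by_cases h : ω'.val j = ω.val j
  · rw [if_pos h]; exact (hdist j (ω.val j) (ω.2 j)).1 _
  · rw [if_neg h]

lemma wgt_total (hdist : ∀ (j : Fin n) (s : G.S j), s ∈ G.NSD K j → IsDist (bel j s))
    (hsupp : ∀ (j : Fin n) (s : G.S j), s ∈ G.NSD K j →
      ∀ τ, 0 < bel j s τ → ∀ j', τ j' ∈ G.NSD K j'.val)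
    (j : Fin n) (ω : ZOmega G K) : ∑ ω' : ZOmega G K, wgt G K bel j ω ω' = 1 := by
  unfold wgt
  rw [sum_core G K (j := j) (ω.val j) (ω.2 j) (bel j (ω.val j))
    (fun τ hτ => by
      by_contra hne
      have h0 : 0 < bel j (ω.val j) τ :=
        lt_of_le_of_ne ((hdist j (ω.val j) (ω.2 j)).1 τ) (Ne.symm hne)
      exact hτ (hsupp j (ω.val j) (ω.2 j) τ h0))]
  exact (hdist j (ω.val j) (ω.2 j)).2

lemma finMeasure_wgt_strat (hdist : ∀ (j : Fin n) (s : G.S j), s ∈ G.NSD K j → IsDist (bel j s))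
    (hsupp : ∀ (j : Fin n) (s : G.S j), s ∈ G.NSD K j →
      ∀ τ, 0 < bel j s τ → ∀ j', τ j' ∈ G.NSD K j'.val)
    (j : Fin n) (ω : ZOmega G K) :
    finMeasure (wgt G K bel j ω) {ω' : ZOmega G K | ω'.val j = ω.val j} = 1 := by
  rw [finMeasure_apply]
  have hterm : ∀ ω' : ZOmega G K,
      Set.indicator {ω'' : ZOmega G K | ω''.val j = ω.val j}
        (fun ω'' => ENNReal.ofReal (wgt G K bel j ω ω'')) ω'
      = ENNReal.ofReal (wgt G K bel j ω ω') := by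
    intro ω'
    by_cases h : ω' ∈ {ω'' : ZOmega G K | ω''.val j = ω.val j}
    · rw [Set.indicator_of_mem h]
    · rw [Set.indicator_of_notMem h]
      have h' : ¬ ω'.val j = ω.val j := h
      unfold wgt
      rw [if_neg h', ENNReal.ofReal_zero]
  rw [Finset.sum_congr rfl fun ω' _ => hterm ω',
    ← ENNReal.ofReal_sum_of_nonneg fun ω' _ => wgt_nonneg G K bel hdist j ω ω',
    wgt_total G K bel hdist hsupp j ω, ENNReal.ofReal_one]

lemma finMeasure_wgt_univ (hdist : ∀ (j : Fin n) (s : G.S j), s ∈ G.NSD K j → IsDist (bel j s))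
    (hsupp : ∀ (j : Fin n) (s : G.S j), s ∈ G.NSD K j →
      ∀ τ, 0 < bel j s τ → ∀ j', τ j' ∈ G.NSD K j'.val)
    (j : Fin n) (ω : ZOmega G K) :
    finMeasure (wgt G K bel j ω) Set.univ = 1 := by
  rw [finMeasure_apply]
  simp only [Set.indicator_univ]
  rw [← ENNReal.ofReal_sum_of_nonneg fun ω' _ => wgt_nonneg G K bel hdist j ω ω',
    wgt_total G K bel hdist hsupp j ω, ENNReal.ofReal_one]

/-- The constructed probability structure. -/
noncomputable def theStruct
    (hdist : ∀ (j : Fin n) (s : G.S j), s ∈ G.NSD K j → IsDist (bel j s))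
    (hsupp : ∀ (j : Fin n) (s : G.S j), s ∈ G.NSD K j →
      ∀ τ, 0 < bel j s τ → ∀ j', τ j' ∈ G.NSD K j'.val) : PStruct G where
  Ω := ZOmega G K
  meas := ⊤
  strat := Subtype.val
  PR := fun j ω => finMeasure (wgt G K bel j ω)
  PR_prob := fun j ω => ⟨finMeasure_wgt_univ G K bel hdist hsupp j ω⟩
  strat_meas := fun _ _ => MeasurableSpace.measurableSet_top
  PR_own_strat := fun j ω => finMeasure_wgt_strat G K bel hdist hsupp j ω
  PR_meas := fun _ _ => MeasurableSpace.measurableSet_top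
  PR_own_PR := by
    intro j ω
    have hsub : {ω' : ZOmega G K | ω'.val j = ω.val j}
        ⊆ {ω' : ZOmega G K | finMeasure (wgt G K bel j ω') = finMeasure (wgt G K bel j ω)} := by
      intro ω' (hω' : ω'.val j = ω.val j)
      have : wgt G K bel j ω' = wgt G K bel j ω := by
        funext ω''
        unfold wgt
        rw [hω']
      simp only [Set.mem_setOf_eq, this]
    refine le_antisymm ?_ ?_
    · haveI : IsProbabilityMeasure (finMeasure (wgt G K bel j ω)) :=
        ⟨finMeasure_wgt_univ G K bel hdist hsupp j ω⟩
      exact prob_le_one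
    · calc (1 : ENNReal)
          = finMeasure (wgt G K bel j ω) {ω' : ZOmega G K | ω'.val j = ω.val j} :=
            (finMeasure_wgt_strat G K bel hdist hsupp j ω).symm
        _ ≤ _ := measure_mono hsub

set_option maxHeartbeats 2000000 in
lemma theStruct_belief
    (hdist : ∀ (j : Fin n) (s : G.S j), s ∈ G.NSD K j → IsDist (bel j s))
    (hsupp : ∀ (j : Fin n) (s : G.S j), s ∈ G.NSD K j →
      ∀ τ, 0 < bel j s τ → ∀ j', τ j' ∈ G.NSD K j'.val)
    (j : Fin n) (ω : ZOmega G K) :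
    (theStruct G K bel hdist hsupp).belief j ω = bel j (ω.val j) := by
  funext τ0
  show (finMeasure (wgt G K bel j ω)
      {ω' : ZOmega G K | G.stratOpp j ω'.val = τ0}).toReal = bel j (ω.val j) τ0
  rw [finMeasure_apply_toReal _ (wgt_nonneg G K bel hdist j ω)]
  have hterm : ∀ ω' : ZOmega G K,
      Set.indicator {ω'' : ZOmega G K | G.stratOpp j ω''.val = τ0}
        (wgt G K bel j ω) ω'
      = (if ω'.val j = ω.val j
          then (if G.stratOpp j ω'.val = τ0 then bel j (ω.val j) (G.stratOpp j ω'.val) else 0)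
          else 0) := by
    intro ω'
    by_cases h1 : ω' ∈ {ω'' : ZOmega G K | G.stratOpp j ω''.val = τ0}
    · rw [Set.indicator_of_mem h1]
      have h1' : G.stratOpp j ω'.val = τ0 := h1
      unfold wgt
      by_cases h2 : ω'.val j = ω.val j
      · rw [if_pos h2, if_pos h2, if_pos h1']
      · rw [if_neg h2, if_neg h2]
    · rw [Set.indicator_of_notMem h1]
      have h1' : ¬ G.stratOpp j ω'.val = τ0 := h1
      by_cases h2 : ω'.val j = ω.val j
      · rw [if_pos h2, if_neg h1']
      · rw [if_neg h2]
  calc ∑ ω' : ZOmega G K,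
        Set.indicator {ω'' : ZOmega G K | G.stratOpp j ω''.val = τ0} (wgt G K bel j ω) ω'
      = ∑ ω' : ZOmega G K, (if ω'.val j = ω.val j
          then (fun τ => if τ = τ0 then bel j (ω.val j) τ else 0) (G.stratOpp j ω'.val)
          else 0) := Finset.sum_congr rfl fun ω' _ => hterm ω'
    _ = ∑ τ : G.OppProf j, (if τ = τ0 then bel j (ω.val j) τ else 0) := by
        refine sum_core G K (j := j) (ω.val j) (ω.2 j)
          (fun τ => if τ = τ0 then bel j (ω.val j) τ else 0) (fun τ hτ => ?_)
        show (if τ = τ0 then bel j (ω.val j) τ else 0) = 0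
        by_cases h1 : τ = τ0
        · rw [if_pos h1]
          by_contra hne
          have h0 : 0 < bel j (ω.val j) τ :=
            lt_of_le_of_ne ((hdist j (ω.val j) (ω.2 j)).1 τ) (Ne.symm hne)
          exact hτ (hsupp j (ω.val j) (ω.2 j) τ h0)
        · rw [if_neg h1]
    _ = bel j (ω.val j) τ0 := by rw [Finset.sum_ite_eq' Finset.univ τ0]; simp

lemma theStruct_RATi
    (hdist : ∀ (j : Fin n) (s : G.S j), s ∈ G.NSD K j → IsDist (bel j s))
    (hsupp : ∀ (j : Fin n) (s : G.S j), s ∈ G.NSD K j →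
      ∀ τ, 0 < bel j s τ → ∀ j', τ j' ∈ G.NSD K j'.val)
    (hbr : ∀ (j : Fin n) (s : G.S j), s ∈ G.NSD K j → G.BR j s (bel j s))
    (j : Fin n) (ω : ZOmega G K) :
    (theStruct G K bel hdist hsupp).RATi j ω := by
  unfold PStruct.RATi
  rw [theStruct_belief G K bel hdist hsupp j ω]
  exact hbr j (ω.val j) (ω.2 j)

lemma theStruct_RATk
    (hdist : ∀ (j : Fin n) (s : G.S j), s ∈ G.NSD K j → IsDist (bel j s))
    (hsupp : ∀ (j : Fin n) (s : G.S j), s ∈ G.NSD K j →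
      ∀ τ, 0 < bel j s τ → ∀ j', τ j' ∈ G.NSD K j'.val)
    (hbr : ∀ (j : Fin n) (s : G.S j), s ∈ G.NSD K j → G.BR j s (bel j s))
    (k : ℕ) (j : Fin n) (ω : ZOmega G K) :
    ω ∈ RATk G (theStruct G K bel hdist hsupp) k j := by
  induction k generalizing j ω with
  | zero => exact Set.mem_univ ω
  | succ k ih =>
    refine ⟨theStruct_RATi G K bel hdist hsupp hbr j ω, ?_⟩
    exact ⟨Set.univ, MeasurableSpace.measurableSet_top,
      fun ω' _ j' _ => ih j' ω',
      ((theStruct G K bel hdist hsupp).PR_prob j ω).measure_univ⟩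

end GameConstruct
end Construct
section Final

lemma NSD_stab {n : ℕ} (G : Game n) : ∃ K : ℕ, ∀ j, G.NSD (K+1) j = G.NSD K j := by
  classical
  set f : ℕ → ℕ := fun k => ∑ j, (G.NSD k j).ncard with hf
  have hstep : ∀ k, f (k+1) ≤ f k := fun k =>
    Finset.sum_le_sum fun j _ => Set.ncard_le_ncard (G.NSD_succ_subset k j) (Set.toFinite _)
  obtain ⟨K, hK⟩ := Nat.sInf_mem (Set.range_nonempty f)
  have hle : f K ≤ f (K+1) := by rw [hK]; exact Nat.sInf_le ⟨K+1, rfl⟩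
  have heq : f (K+1) = f K := le_antisymm (hstep K) hle
  refine ⟨K, fun j => ?_⟩
  have hcard : ∀ j, (G.NSD (K+1) j).ncard = (G.NSD K j).ncard := by
    by_contra hc
    push_neg at hc
    obtain ⟨j0, hj0⟩ := hc
    have hlt : (G.NSD (K+1) j0).ncard < (G.NSD K j0).ncard :=
      lt_of_le_of_ne (Set.ncard_le_ncard (G.NSD_succ_subset K j0) (Set.toFinite _)) hj0
    have : f (K+1) < f K :=
      Finset.sum_lt_sum
        (fun j _ => Set.ncard_le_ncard (G.NSD_succ_subset K j) (Set.toFinite _))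
        ⟨j0, Finset.mem_univ j0, hlt⟩
    omega
  exact Set.eq_of_subset_of_ncard_le (G.NSD_succ_subset K j) (hcard j).symm.le (Set.toFinite _)

lemma exists_belief_of_not_dominated {n : ℕ} (G : Game n) (K : ℕ)
    (hstab : ∀ j, G.NSD (K+1) j = G.NSD K j) (j : Fin n) (s : G.S j) (hs : s ∈ G.NSD K j) :
    ∃ μ : G.OppProf j → ℝ, IsDist μ ∧ (∀ τ, 0 < μ τ → ∀ j', τ j' ∈ G.NSD K j'.val)
      ∧ G.BR j s μ := by
  have hs1 : s ∈ G.NSD (K+1) j := (hstab j) ▸ hs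
  have hnd := hs1.2
  have hnd' : ¬ ∃ m : G.S j → ℝ, IsDist m ∧
      ∀ τ ∈ {τ : G.OppProf j | ∀ j', τ j' ∈ G.NSD K j'.val},
        0 < ∑ s', m s' * (G.u j (G.combine j s' τ) - G.u j (G.combine j s τ)) := by
    rintro ⟨m, hm, hdd⟩
    refine hnd ⟨m, hm, fun τ hτ => ?_⟩
    have h1 := hdd τ hτ
    have h2 : ∑ s', m s' * (G.u j (G.combine j s' τ) - G.u j (G.combine j s τ))
        = G.EUmix j m τ - G.u j (G.combine j s τ) := by
      calc ∑ s', m s' * (G.u j (G.combine j s' τ) - G.u j (G.combine j s τ))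
          = (∑ s', m s' * G.u j (G.combine j s' τ))
            - ∑ s', m s' * G.u j (G.combine j s τ) := by
            rw [← Finset.sum_sub_distrib]
            exact Finset.sum_congr rfl fun s' _ => by ring
        _ = G.EUmix j m τ - G.u j (G.combine j s τ) := by
            unfold Game.EUmix
            rw [← Finset.sum_mul, hm.2, one_mul]
    linarith
  obtain ⟨μ, h1, h2, h3⟩ := dual_exists
    (fun s' τ => G.u j (G.combine j s' τ) - G.u j (G.combine j s τ)) _ hnd'
  refine ⟨μ, h1, h2, fun s' => ?_⟩
  have h4 := h3 s'
  have heq : ∑ τ, μ τ * (G.u j (G.combine j s' τ) - G.u j (G.combine j s τ))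
      = G.EU j s' μ - G.EU j s μ := by
    unfold Game.EU
    rw [← Finset.sum_sub_distrib]
    exact Finset.sum_congr rfl fun τ _ => by ring
  rw [heq] at h4
  linarith

lemma construction_exists {n : ℕ} (G : Game n) (i : Fin n) (σ : G.S i)
    (h : ∀ k, σ ∈ Game.NSD G k i) :
    ∃ (M : PStruct G) (ω : M.Ω), Finite M.Ω ∧ M.meas = ⊤ ∧
      M.strat ω i = σ ∧ ∀ k : ℕ, ω ∈ RATk G M k i := by
  classical
  obtain ⟨K, hK⟩ := NSD_stab G
  have hbel : ∀ (j : Fin n) (s : G.S j), ∃ μ : G.OppProf j → ℝ,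
      s ∈ G.NSD K j → (IsDist μ ∧ (∀ τ, 0 < μ τ → ∀ j', τ j' ∈ G.NSD K j'.val)
        ∧ G.BR j s μ) := by
    intro j s
    by_cases hs : s ∈ G.NSD K j
    · obtain ⟨μ, h1, h2, h3⟩ := exists_belief_of_not_dominated G K hK j s hs
      exact ⟨μ, fun _ => ⟨h1, h2, h3⟩⟩
    · exact ⟨fun _ => 0, fun hs' => absurd hs' hs⟩
  choose bel hbelspec using hbel
  have hdist : ∀ (j : Fin n) (s : G.S j), s ∈ G.NSD K j → IsDist (bel j s) :=
    fun j s hs => (hbelspec j s hs).1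
  have hsupp : ∀ (j : Fin n) (s : G.S j), s ∈ G.NSD K j →
      ∀ τ, 0 < bel j s τ → ∀ j', τ j' ∈ G.NSD K j'.val :=
    fun j s hs => (hbelspec j s hs).2.1
  have hbr : ∀ (j : Fin n) (s : G.S j), s ∈ G.NSD K j → G.BR j s (bel j s) :=
    fun j s hs => (hbelspec j s hs).2.2
  refine ⟨GameConstruct.theStruct G K bel hdist hsupp,
    ⟨G.combine i σ (fun j' => (G.NSD_nonempty K j'.val).some), ?_⟩, ?_, rfl, ?_, ?_⟩
  · intro j
    by_cases hj : j = i
    · subst hj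
      rw [G.combine_self]
      exact h K
    · rw [G.combine_ne i σ _ j hj]
      exact (G.NSD_nonempty K j).some_mem
  · exact inferInstanceAs (Finite (GameConstruct.ZOmega G K))
  · show G.combine i σ (fun j' => (G.NSD_nonempty K j'.val).some) i = σ
    exact G.combine_self i σ _
  · intro k
    exact GameConstruct.theStruct_RATk G K bel hdist hsupp hbr k i _

end Final

/-- characterization of surviving iterated deletion of strongly dominated
strategies via `RAT^k_i` for all `k`; moreover the structure can be taken finite with
every subset measurable. -/
theorem iterated_strict_dominance_limit_characterization {n : ℕ} (G : Game n) (i : Fin n)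
    (σ : G.S i) :
    ((∀ k : ℕ, σ ∈ Game.NSD G k i) ↔
      ∃ (M : PStruct G) (ω : M.Ω), M.strat ω i = σ ∧ ∀ k : ℕ, ω ∈ RATk G M k i) ∧
    ((∀ k : ℕ, σ ∈ Game.NSD G k i) →
      ∃ (M : PStruct G) (ω : M.Ω), Finite M.Ω ∧ M.meas = ⊤ ∧
        M.strat ω i = σ ∧ ∀ k : ℕ, ω ∈ RATk G M k i) := by
  constructor
  · constructor
    · intro h
      obtain ⟨M, ω, _, _, hs, hr⟩ := construction_exists G i σ h
      exact ⟨M, ω, hs, hr⟩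
    · rintro ⟨M, ω, hs, hr⟩ k
      have := strat_mem_NSD_of_RATk M k i ω (hr k)
      rwa [hs] at this
  · exact construction_exists G i σ
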